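/- arXiv:1801.08782 — 2 statements merged into one kernel-verified Lean document; each statement's English description precedes it below -/
import Mathlib

section
/- Let Γ be a tetravalent G-half-arc-transitive graph for some G ≤ Aut(Γ), let r = rad_G(Γ), a = att_G(Γ) and ℓ = 2r/a. Fix one of the two G-induced orientations of the edges of Γ, let v be a vertex of Γ, and let C = (u_0, u_1, …, u_{2r−1}) and C' = (v_0, v_1, …, v_{2r−1}) be the two G-alternating cycles containing v, where u_0 = v_0 = v, v is the tail of the two arcs of C incident to it, and u_ℓ = v_{q_t ℓ}. Then u_{iℓ} = v_{i q_t ℓ} holds for each 0 ≤ i < a. Similarly, if v_ℓ = u_{q_h ℓ} then v_{iℓ} = u_{i q_h ℓ} holds for each 0 ≤ i < a, and if v_ℓ = u_{−q_h ℓ} then v_{iℓ} = u_{−i q_h ℓ} holds for each 0 ≤ i < a. -/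
/-! Common definitions for tetravalent half-arc-transitive graph theory. -/

open SimpleGraph Set

namespace HalfArc

variable {V W : Type*}

/-- A subgroup of automorphisms acts transitively on the vertices. -/
def IsVertexTrans (Γ : SimpleGraph V) (G : Subgroup (Γ ≃g Γ)) : Prop :=
  ∀ u v : V, ∃ g ∈ G, g u = v

/-- A subgroup of automorphisms acts transitively on the edges. -/
def IsEdgeTrans (Γ : SimpleGraph V) (G : Subgroup (Γ ≃g Γ)) : Prop :=
  ∀ ⦃u v u' v' : V⦄, Γ.Adj u v → Γ.Adj u' v' →
    ∃ g ∈ G, (g u = u' ∧ g v = v') ∨ (g u = v' ∧ g v = u')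

/-- A subgroup of automorphisms acts transitively on the arcs (ordered pairs of
adjacent vertices). -/
def IsArcTrans (Γ : SimpleGraph V) (G : Subgroup (Γ ≃g Γ)) : Prop :=
  ∀ ⦃u v u' v' : V⦄, Γ.Adj u v → Γ.Adj u' v' → ∃ g ∈ G, g u = u' ∧ g v = v'

/-- Half-arc-transitive: vertex- and edge- but not arc-transitive. -/
def IsHalfArcTrans (Γ : SimpleGraph V) (G : Subgroup (Γ ≃g Γ)) : Prop :=
  IsVertexTrans Γ G ∧ IsEdgeTrans Γ G ∧ ¬ IsArcTrans Γ G

/-- An alternating cycle of length `n` in a graph `Γ` whose edges carry an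
orientation `O`: a cyclic sequence of pairwise distinct vertices in which
consecutive vertices are adjacent and any two consecutive edges have opposite
orientations. -/
structure AltCycle (Γ : SimpleGraph V) (O : V → V → Prop) (n : ℕ) where
  f : ZMod n → V
  inj : Function.Injective f
  adj : ∀ i, Γ.Adj (f i) (f (i + 1))
  alt : ∀ i, O (f i) (f (i + 1)) ↔ O (f (i + 2)) (f (i + 1))

/-- The vertex set of an alternating cycle. -/
def cycVerts {Γ : SimpleGraph V} {O : V → V → Prop} {n : ℕ} (c : AltCycle Γ O n) : Set V :=
  Set.range c.f

/-- The edge set of an alternating cycle. -/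
def cycEdges {Γ : SimpleGraph V} {O : V → V → Prop} {n : ℕ} (c : AltCycle Γ O n) :
    Set (Sym2 V) :=
  Set.range fun i => s(c.f i, c.f (i + 1))

/-- The sets of edges of alternating cycles (an alternating cycle, as a subgraph,
is determined by its edge set). -/
def IsAltEdgeSet (Γ : SimpleGraph V) (O : V → V → Prop) (n : ℕ) (E : Set (Sym2 V)) : Prop :=
  ∃ c : AltCycle Γ O n, cycEdges c = E

/-- The vertex sets of alternating cycles. -/
def IsAltVertSet (Γ : SimpleGraph V) (O : V → V → Prop) (n : ℕ) (A : Set V) : Prop :=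
  ∃ c : AltCycle Γ O n, cycVerts c = A

/-- The set of vertices covered by a set of edges. -/
def suppOf (E : Set (Sym2 V)) : Set V := {v | ∃ e ∈ E, v ∈ e}

/-- The graph of alternating cycles: its vertices are the alternating cycles
(represented by their edge sets), two of them adjacent whenever they share a vertex. -/
def altGraph (Γ : SimpleGraph V) (O : V → V → Prop) (n : ℕ) :
    SimpleGraph {E : Set (Sym2 V) // IsAltEdgeSet Γ O n E} where
  Adj X Y := X ≠ Y ∧ (suppOf X.1 ∩ suppOf Y.1).Nonempty
  symm := by
    refine ⟨?_⟩
    rintro X Y ⟨hne, x, hx1, hx2⟩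
    exact ⟨hne.symm, x, hx2, hx1⟩
  loopless := by refine ⟨?_⟩; rintro X ⟨hne, -⟩; exact hne rfl

/-- The attachment sets: nonempty intersections of (the vertex sets of) two distinct
alternating cycles. -/
def IsAttSet (Γ : SimpleGraph V) (O : V → V → Prop) (n : ℕ) (A : Set V) : Prop :=
  ∃ c c' : AltCycle Γ O n, cycEdges c ≠ cycEdges c' ∧ (cycVerts c ∩ cycVerts c').Nonempty ∧
    A = cycVerts c ∩ cycVerts c'

/-- `attachmentIs Γ O n a` : any two distinct alternating cycles with nonempty
intersection meet in exactly `a` vertices. -/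
def attachmentIs (Γ : SimpleGraph V) (O : V → V → Prop) (n a : ℕ) : Prop :=
  ∀ A : Set V, IsAttSet Γ O n A → A.ncard = a

/-- A `k`-step rotation of an alternating cycle (in one of the two directions). -/
def IsRot {Γ : SimpleGraph V} {O : V → V → Prop} {n : ℕ} (c : AltCycle Γ O n)
    (g : V → V) (k : ℕ) : Prop :=
  (∀ i, g (c.f i) = c.f (i + k)) ∨ (∀ i, g (c.f i) = c.f (i - k))

/-- The setup of the paper: a finite connected tetravalent graph `Γ`, a subgroup `G`
of its automorphism group acting half-arc-transitively, one of the two `G`-induced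
orientations `O` of the edges of `Γ` (an orbit of `G` on arcs), the `G`-radius `r`
(half the common length of all `G`-alternating cycles) and the `G`-attachment
number `att`, together with the basic structural facts relating them. -/
structure Setup (V : Type*) where
  Γ : SimpleGraph V
  finite : Finite V
  conn : Γ.Connected
  tetra : ∀ v : V, (Γ.neighborSet v).ncard = 4
  G : Subgroup (Γ ≃g Γ)
  hat : IsHalfArcTrans Γ G
  O : V → V → Prop
  O_adj : ∀ ⦃u v⦄, O u v → Γ.Adj u v
  O_choice : ∀ ⦃u v⦄, Γ.Adj u v → (O u v ↔ ¬ O v u)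
  O_inv : ∀ g ∈ G, ∀ ⦃u v⦄, O u v → O (g u) (g v)
  O_orbit : ∀ ⦃u v u' v'⦄, O u v → O u' v' → ∃ g ∈ G, g u = u' ∧ g v = v'
  r : ℕ
  r_pos : 0 < r
  /-- every vertex lies on exactly two `G`-alternating cycles, each of length `2 * r` -/
  alt_cover : ∀ v : V, {E : Set (Sym2 V) | IsAltEdgeSet Γ O (2 * r) E ∧ v ∈ suppOf E}.ncard = 2
  att : ℕ
  att_pos : 0 < att
  /-- any two non-disjoint `G`-alternating cycles meet in exactly `att` vertices -/
  att_eq : attachmentIs Γ O (2 * r) att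
  att_dvd : att ∣ 2 * r

namespace Setup

variable {V : Type*} (S : Setup V)

/-- The kernel of the action of `G` on the set of `G`-alternating cycles:
the elements of `G` fixing every `G`-alternating cycle setwise. -/
def altKernel : Subgroup (S.Γ ≃g S.Γ) where
  carrier := {g | g ∈ S.G ∧ ∀ E : Set (Sym2 V),
    IsAltEdgeSet S.Γ S.O (2 * S.r) E → Sym2.map (g : V → V) '' E = E}
  one_mem' := by
    refine ⟨S.G.one_mem, fun E _ => ?_⟩
    have : Sym2.map ((1 : S.Γ ≃g S.Γ) : V → V) = id := by
      funext e
      have : ((1 : S.Γ ≃g S.Γ) : V → V) = id := rfl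
      rw [this, Sym2.map_id, id]
    rw [this, Set.image_id]
  mul_mem' := by
    rintro g h ⟨hg, hg'⟩ ⟨hh, hh'⟩
    refine ⟨S.G.mul_mem hg hh, fun E hE => ?_⟩
    have hcomp : Sym2.map ((g * h : S.Γ ≃g S.Γ) : V → V)
        = Sym2.map (g : V → V) ∘ Sym2.map (h : V → V) := by
      funext e
      have : ((g * h : S.Γ ≃g S.Γ) : V → V) = (g : V → V) ∘ (h : V → V) := rfl
      rw [this, Function.comp_apply, ← Sym2.map_map]
    rw [hcomp, Set.image_comp, hh' E hE, hg' E hE]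
  inv_mem' := by
    rintro g ⟨hg, hg'⟩
    refine ⟨S.G.inv_mem hg, fun E hE => ?_⟩
    conv_lhs => rw [← hg' E hE]
    rw [← Set.image_comp]
    have : Sym2.map ((g⁻¹ : S.Γ ≃g S.Γ) : V → V) ∘ Sym2.map (g : V → V) = id := by
      funext e
      rw [Function.comp_apply, Sym2.map_map]
      have h1 : ((g⁻¹ : S.Γ ≃g S.Γ) : V → V) ∘ (g : V → V) = id := by
        funext v
        exact g.toEquiv.symm_apply_apply v
      rw [h1, Sym2.map_id]
    rw [this, Set.image_id]

/-- The kernel of the action of `G` on a collection of sets of vertices. -/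
def kernelOn (P : Set V → Prop) : Subgroup (S.Γ ≃g S.Γ) where
  carrier := {g | g ∈ S.G ∧ ∀ A : Set V, P A → (g : V → V) '' A = A}
  one_mem' := ⟨S.G.one_mem, fun A _ => by
    have : ((1 : S.Γ ≃g S.Γ) : V → V) = id := rfl
    rw [this, Set.image_id]⟩
  mul_mem' := by
    rintro g h ⟨hg, hg'⟩ ⟨hh, hh'⟩
    refine ⟨S.G.mul_mem hg hh, fun A hA => ?_⟩
    have : ((g * h : S.Γ ≃g S.Γ) : V → V) = (g : V → V) ∘ (h : V → V) := rfl
    rw [this, Set.image_comp, hh' A hA, hg' A hA]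
  inv_mem' := by
    rintro g ⟨hg, hg'⟩
    refine ⟨S.G.inv_mem hg, fun A hA => ?_⟩
    conv_lhs => rw [← hg' A hA]
    rw [← Set.image_comp]
    have : ((g⁻¹ : S.Γ ≃g S.Γ) : V → V) ∘ (g : V → V) = id := by
      funext v; exact g.toEquiv.symm_apply_apply v
    rw [this, Set.image_id]

/-- The kernel of the action of `G` on the set of all `G`-attachment sets. -/
def attKernel : Subgroup (S.Γ ≃g S.Γ) :=
  S.kernelOn (IsAttSet S.Γ S.O (2 * S.r))

/-- The block `B_s(C; u_i) = {u_{i+2sj} : 0 ≤ j < att}` of Construction 5.3. -/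
def blockSet (s : ℕ) (c : AltCycle S.Γ S.O (2 * S.r)) (i : ZMod (2 * S.r)) : Set V :=
  {v | ∃ j : ℕ, j < S.att ∧ v = c.f (i + (2 * s * j : ℕ))}

/-- The imprimitivity block system `B` of Construction 5.3. -/
def Blocks (s : ℕ) : Set (Set V) :=
  {A | ∃ (c : AltCycle S.Γ S.O (2 * S.r)) (i : ZMod (2 * S.r)), A = S.blockSet s c i}

/-- The quotient graph `Γ_B` of `Γ` with respect to the block system `B`. -/
def quotGraph (s : ℕ) : SimpleGraph {A : Set V // A ∈ S.Blocks s} where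
  Adj X Y := X ≠ Y ∧ ∃ u ∈ X.1, ∃ v ∈ Y.1, S.Γ.Adj u v
  symm := by
    refine ⟨?_⟩
    rintro X Y ⟨hne, u, hu, v, hv, ha⟩
    exact ⟨hne.symm, v, hv, u, hu, ha.symm⟩
  loopless := by refine ⟨?_⟩; rintro X ⟨hne, -⟩; exact hne rfl

/-- The kernel of the action of `G` on the quotient graph `Γ_B`. -/
def quotKernel (s : ℕ) : Subgroup (S.Γ ≃g S.Γ) :=
  S.kernelOn (· ∈ S.Blocks s)

/-- The orientation of the edges of the quotient graph `Γ_B` induced by `O`. -/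
def quotO (s : ℕ) (X Y : {A : Set V // A ∈ S.Blocks s}) : Prop :=
  ∃ u ∈ X.1, ∃ v ∈ Y.1, S.O u v

end Setup

/-- The data defining the parameters `q_t` and `q_h` of Section 3: a vertex `v`,
the two `G`-alternating cycles `c` and `c'` through `v` (with `v = u_0 = v_0` and
`v` the tail of the two arcs of `c` incident to it), and the minimality properties
defining `q_t` and `q_h`.  Here `ell = 2r/att`. -/
structure JumpData {V : Type*} (S : Setup V) where
  v : V
  c : AltCycle S.Γ S.O (2 * S.r)
  c' : AltCycle S.Γ S.O (2 * S.r)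
  ell : ℕ
  hell : S.att * ell = 2 * S.r
  hc : c.f 0 = v
  hc' : c'.f 0 = v
  hne : cycEdges c ≠ cycEdges c'
  htail₁ : S.O v (c.f 1)
  htail₂ : S.O v (c.f (-1))
  qt : ℕ
  qh : ℕ
  hqt : c'.f ((qt * ell : ℕ)) = c.f ((ell : ℕ)) ∨
    c'.f ((qt * ell : ℕ)) = c.f (-(ell : ZMod (2 * S.r)))
  hqt_min : ∀ m : ℕ, m < qt → ¬(c'.f ((m * ell : ℕ)) = c.f ((ell : ℕ)) ∨
    c'.f ((m * ell : ℕ)) = c.f (-(ell : ZMod (2 * S.r))))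
  hqh : c.f ((qh * ell : ℕ)) = c'.f ((ell : ℕ)) ∨
    c.f ((qh * ell : ℕ)) = c'.f (-(ell : ZMod (2 * S.r)))
  hqh_min : ∀ m : ℕ, m < qh → ¬(c.f ((m * ell : ℕ)) = c'.f ((ell : ℕ)) ∨
    c.f ((m * ell : ℕ)) = c'.f (-(ell : ZMod (2 * S.r))))

/-- The `G`-alternating jump `jum_G(Γ) = min {q_t, q_h}`. -/
def JumpData.jump {V : Type*} {S : Setup V} (J : JumpData S) : ℕ := min J.qt J.qh

end HalfArc

namespace HATAux

open HalfArc HalfArc.Setup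

variable {V : Type*}

lemma o_total (S : Setup V) {u w : V} (h : S.Γ.Adj u w) : S.O u w ∨ S.O w u := by
  by_cases h1 : S.O u w
  · exact Or.inl h1
  · exact Or.inr ((S.O_choice h.symm).mpr h1)

lemma o_iff (S : Setup V) {g : S.Γ ≃g S.Γ} (hg : g ∈ S.G) (u w : V) :
    S.O (g u) (g w) ↔ S.O u w := by
  constructor
  · intro h
    have h2 := S.O_inv g⁻¹ (S.G.inv_mem hg) h
    have e1 : (g⁻¹ : S.Γ ≃g S.Γ) (g u) = u := g.toEquiv.symm_apply_apply u
    have e2 : (g⁻¹ : S.Γ ≃g S.Γ) (g w) = w := g.toEquiv.symm_apply_apply w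
    rwa [e1, e2] at h2
  · exact fun h => S.O_inv g hg h

/-- The image of an alternating cycle under `g ∈ G`. -/
def imageCycle (S : Setup V) (g : S.Γ ≃g S.Γ) (hg : g ∈ S.G)
    (b : AltCycle S.Γ S.O (2 * S.r)) : AltCycle S.Γ S.O (2 * S.r) where
  f := fun i => g (b.f i)
  inj := fun _ _ hab => b.inj (g.toEquiv.injective hab)
  adj := fun i => g.map_adj_iff.mpr (b.adj i)
  alt := fun i => by
    rw [o_iff S hg, o_iff S hg]; exact b.alt i

lemma cycEdges_imageCycle (S : Setup V) (g : S.Γ ≃g S.Γ) (hg : g ∈ S.G)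
    (b : AltCycle S.Γ S.O (2 * S.r)) :
    cycEdges (imageCycle S g hg b) = Sym2.map g '' cycEdges b := by
  ext e
  constructor
  · rintro ⟨i, rfl⟩
    exact ⟨s(b.f i, b.f (i + 1)), ⟨i, rfl⟩, (Sym2.map_pair_eq _ _ _)⟩
  · rintro ⟨e', ⟨i, rfl⟩, rfl⟩
    exact ⟨i, (Sym2.map_pair_eq (⇑g) (b.f i) (b.f (i + 1))).symm⟩

/-- The reverse of an alternating cycle. -/
def revAlt {S : Setup V} (b : AltCycle S.Γ S.O (2 * S.r)) : AltCycle S.Γ S.O (2 * S.r) where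
  f := fun i => b.f (-i)
  inj := fun a a' h => by
    have := b.inj h; exact neg_injective this
  adj := fun i => by
    have h := b.adj (-(i + 1))
    rw [show -(i + 1) + 1 = -i by ring] at h
    exact h.symm
  alt := fun i => by
    have h := b.alt (-(i + 2))
    rw [show -(i + 2) + 1 = -(i + 1) by ring, show -(i + 2) + 2 = -i by ring] at h
    exact h.symm

lemma cycEdges_revAlt {S : Setup V} (b : AltCycle S.Γ S.O (2 * S.r)) :
    cycEdges (revAlt b) = cycEdges b := by
  unfold cycEdges revAlt
  ext e
  constructor
  · rintro ⟨i, rfl⟩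
    refine ⟨-(i + 1), ?_⟩
    show s(b.f (-(i+1)), b.f (-(i+1) + 1)) = s(b.f (-i), b.f (-(i + 1)))
    rw [show -(i + 1) + 1 = -i by ring]
    exact Sym2.eq_swap
  · rintro ⟨j, rfl⟩
    refine ⟨-(j + 1), ?_⟩
    show s(b.f (-(-(j+1))), b.f (-(-(j + 1) + 1))) = s(b.f j, b.f (j+1))
    rw [show -(-(j+1)) = j + 1 by ring, show -(-(j + 1) + 1) = j by ring]
    exact Sym2.eq_swap

lemma edges_at {S : Setup V} (b : AltCycle S.Γ S.O (2 * S.r)) {e : Sym2 V}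
    (he : e ∈ cycEdges b) (t : ZMod (2 * S.r)) (ht : b.f t ∈ e) :
    e = s(b.f t, b.f (t + 1)) ∨ e = s(b.f (t - 1), b.f t) := by
  obtain ⟨i, rfl⟩ := he
  rcases Sym2.mem_iff.mp ht with h | h
  · left; rw [b.inj h]
  · right
    have hi : i = t - 1 := by rw [eq_sub_iff_add_eq, ← b.inj h]
    show s(b.f i, b.f (i + 1)) = _
    rw [hi, show t - 1 + 1 = t by ring]

lemma mem_supp_of_mem_verts {S : Setup V} (b : AltCycle S.Γ S.O (2 * S.r)) {x : V}
    (hx : x ∈ cycVerts b) : x ∈ suppOf (cycEdges b) := by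
  obtain ⟨k, hk⟩ := hx
  exact ⟨s(b.f k, b.f (k + 1)), ⟨k, rfl⟩, hk ▸ Sym2.mem_mk_left _ _⟩

lemma pair_at (S : Setup V) (b b' : AltCycle S.Γ S.O (2 * S.r))
    (hne : cycEdges b ≠ cycEdges b') {x : V}
    (hxb : x ∈ cycVerts b) (hxb' : x ∈ cycVerts b')
    (d : AltCycle S.Γ S.O (2 * S.r)) (hxd : x ∈ cycVerts d) :
    cycEdges d = cycEdges b ∨ cycEdges d = cycEdges b' := by
  have : Finite V := S.finite
  have hT2 : {E : Set (Sym2 V) | IsAltEdgeSet S.Γ S.O (2 * S.r) E ∧ x ∈ suppOf E}.ncard = 2 :=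
    S.alt_cover x
  have hsub : ({cycEdges b, cycEdges b'} : Set (Set (Sym2 V))) ⊆
      {E : Set (Sym2 V) | IsAltEdgeSet S.Γ S.O (2 * S.r) E ∧ x ∈ suppOf E} := by
    rintro E (rfl | rfl)
    · exact ⟨⟨b, rfl⟩, mem_supp_of_mem_verts b hxb⟩
    · exact ⟨⟨b', rfl⟩, mem_supp_of_mem_verts b' hxb'⟩
  have hpair : ({cycEdges b, cycEdges b'} : Set (Set (Sym2 V))) =
      {E : Set (Sym2 V) | IsAltEdgeSet S.Γ S.O (2 * S.r) E ∧ x ∈ suppOf E} :=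
    Set.eq_of_subset_of_ncard_le hsub (by rw [hT2, Set.ncard_pair hne]) (Set.toFinite _)
  have hd : cycEdges d ∈ ({cycEdges b, cycEdges b'} : Set (Set (Sym2 V))) := by
    rw [hpair]
    exact ⟨⟨d, rfl⟩, mem_supp_of_mem_verts d hxd⟩
  exact hd

lemma exists_oriented_arc (S : Setup V) :
    ∃ (d : AltCycle S.Γ S.O (2 * S.r)) (k : ZMod (2 * S.r)), S.O (d.f k) (d.f (k + 1)) := by
  obtain ⟨v0⟩ := S.conn.nonempty
  have hne0 : {E : Set (Sym2 V) | IsAltEdgeSet S.Γ S.O (2 * S.r) E ∧ v0 ∈ suppOf E}.Nonempty :=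
    Set.nonempty_of_ncard_ne_zero (by rw [S.alt_cover v0]; norm_num)
  obtain ⟨E, ⟨⟨c0, rfl⟩, -⟩⟩ := hne0
  rcases o_total S (c0.adj 0) with h | h
  · exact ⟨c0, 0, h⟩
  · refine ⟨revAlt c0, -1, ?_⟩
    show S.O (c0.f (-(-1))) (c0.f (-(-1 + 1)))
    rw [show -(-1 : ZMod (2 * S.r)) = 1 by ring, show -((-1 : ZMod (2 * S.r)) + 1) = 0 by ring]
    rw [show (1 : ZMod (2 * S.r)) = 0 + 1 by ring]
    exact h

lemma exists_cycle_edge (S : Setup V) {u w : V} (h : S.Γ.Adj u w) :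
    ∃ d : AltCycle S.Γ S.O (2 * S.r), s(u, w) ∈ cycEdges d := by
  obtain ⟨d0, k, hk⟩ := exists_oriented_arc S
  rcases o_total S h with h' | h'
  · obtain ⟨g, hg, hgu, hgw⟩ := S.O_orbit hk h'
    refine ⟨imageCycle S g hg d0, k, ?_⟩
    show s(g (d0.f k), g (d0.f (k + 1))) = s(u, w)
    rw [hgu, hgw]
  · obtain ⟨g, hg, hgu, hgw⟩ := S.O_orbit hk h'
    refine ⟨imageCycle S g hg d0, k, ?_⟩
    show s(g (d0.f k), g (d0.f (k + 1))) = s(u, w)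
    rw [hgu, hgw]
    exact Sym2.eq_swap

lemma no_shared_aligned (S : Setup V)
    (b b' : AltCycle S.Γ S.O (2 * S.r)) (hne : cycEdges b ≠ cycEdges b')
    (i j : ZMod (2 * S.r)) (e1 : b.f i = b'.f j) (e2 : b.f (i + 1) = b'.f (j + 1)) :
    False := by
  have : Finite V := S.finite
  have hcard : ({b.f i, b.f (i + 2), b'.f (j + 2)} : Set V).ncard
      < (S.Γ.neighborSet (b.f (i + 1))).ncard := by
    rw [S.tetra]
    have t1 := Set.ncard_insert_le (b.f i) ({b.f (i + 2), b'.f (j + 2)} : Set V)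
    have t2 := Set.ncard_insert_le (b.f (i + 2)) ({b'.f (j + 2)} : Set V)
    have t3 : ({b'.f (j + 2)} : Set V).ncard = 1 := Set.ncard_singleton _
    omega
  obtain ⟨z, hz, hznot⟩ := Set.exists_mem_notMem_of_ncard_lt_ncard hcard (Set.toFinite _)
  have hadj : S.Γ.Adj (b.f (i + 1)) z := hz
  obtain ⟨d, hd⟩ := exists_cycle_edge S hadj
  have hwd : b.f (i + 1) ∈ cycVerts d := by
    obtain ⟨k, hk⟩ := hd
    rcases Sym2.eq_iff.mp hk with ⟨ha, -⟩ | ⟨-, hb2⟩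
    · exact ⟨k, ha⟩
    · exact ⟨k + 1, hb2⟩
  have hzne : z ≠ b.f (i + 1) := fun hzz => S.Γ.irrefl (hzz ▸ hadj)
  rcases pair_at S b b' hne ⟨i + 1, rfl⟩ ⟨j + 1, e2.symm⟩ d hwd with hdb | hdb'
  · rw [hdb] at hd
    rcases edges_at b hd (i + 1) (Sym2.mem_mk_left _ _) with hcase | hcase
    · rcases Sym2.eq_iff.mp hcase with ⟨-, hz2⟩ | ⟨-, hz2⟩
      · refine hznot ?_
        rw [show i + 1 + 1 = i + 2 by ring] at hz2
        exact Or.inr (Or.inl hz2)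
      · exact hzne hz2
    · rcases Sym2.eq_iff.mp hcase with ⟨-, hz2⟩ | ⟨-, hz2⟩
      · exact hzne hz2
      · refine hznot ?_
        rw [show i + 1 - 1 = i by ring] at hz2
        exact Or.inl hz2
  · rw [hdb'] at hd
    rcases edges_at b' hd (j + 1) (e2 ▸ Sym2.mem_mk_left _ _) with hcase | hcase
    · rcases Sym2.eq_iff.mp hcase with ⟨-, hz2⟩ | ⟨-, hz2⟩
      · refine hznot ?_
        rw [show j + 1 + 1 = j + 2 by ring] at hz2
        exact Or.inr (Or.inr hz2)
      · exact hzne (hz2.trans e2.symm)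
    · rcases Sym2.eq_iff.mp hcase with ⟨-, hz2⟩ | ⟨-, hz2⟩
      · exact hzne (hz2.trans e2.symm)
      · refine hznot ?_
        rw [show j + 1 - 1 = j by ring] at hz2
        exact Or.inl (hz2.trans e1.symm)

lemma no_shared_edge (S : Setup V)
    (b b' : AltCycle S.Γ S.O (2 * S.r)) (hne : cycEdges b ≠ cycEdges b')
    {e : Sym2 V} (heb : e ∈ cycEdges b) (heb' : e ∈ cycEdges b') : False := by
  obtain ⟨i, rfl⟩ := heb
  obtain ⟨j, hj⟩ := heb'
  rcases Sym2.eq_iff.mp hj with ⟨ha, hb2⟩ | ⟨ha, hb2⟩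
  · exact no_shared_aligned S b b' hne i j ha.symm hb2.symm
  · refine no_shared_aligned S b (revAlt b')
      (fun hEq => hne (hEq.trans (cycEdges_revAlt b'))) i (-(j + 1)) ?_ ?_
    · show b.f i = b'.f (-(-(j + 1)))
      rw [show -(-(j + 1)) = j + 1 by ring]
      exact hb2.symm
    · show b.f (i + 1) = b'.f (-(-(j + 1) + 1))
      rw [show -(-(j + 1) + 1) = j by ring]
      exact ha.symm

lemma follow (S : Setup V) (h1 : (1 : ZMod (2 * S.r)) ≠ 0) (h2 : (2 : ZMod (2 * S.r)) ≠ 0)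
    (g : S.Γ ≃g S.Γ) (hg : g ∈ S.G) (b d : AltCycle S.Γ S.O (2 * S.r)) (t : ZMod (2 * S.r))
    (hE : cycEdges (imageCycle S g hg b) = cycEdges d)
    (h0 : g (b.f 0) = d.f t) (hs : g (b.f 1) = d.f (t + 1)) :
    ∀ i, g (b.f i) = d.f (t + i) := by
  haveI : NeZero (2 * S.r) := ⟨by have := S.r_pos; omega⟩
  have key : ∀ m : ℕ, g (b.f (m : ZMod (2 * S.r))) = d.f (t + (m : ZMod (2 * S.r))) ∧
      g (b.f ((m : ZMod (2 * S.r)) + 1)) = d.f (t + (m : ZMod (2 * S.r)) + 1) := by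
    intro m
    induction m with
    | zero => exact ⟨by simpa using h0, by simpa using hs⟩
    | succ m ih =>
      obtain ⟨A, B⟩ := ih
      have hcast : ((m + 1 : ℕ) : ZMod (2 * S.r)) = (m : ZMod (2 * S.r)) + 1 := by push_cast; ring
      rw [hcast]
      refine ⟨by rw [show t + ((m : ZMod (2 * S.r)) + 1) = t + (m : ZMod (2 * S.r)) + 1 by ring]; exact B, ?_⟩
      have hmem : s(g (b.f ((m : ZMod (2 * S.r)) + 1)), g (b.f ((m : ZMod (2 * S.r)) + 1 + 1)))
          ∈ cycEdges d := by
        rw [← hE]; exact ⟨(m : ZMod (2 * S.r)) + 1, rfl⟩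
      have hin : d.f (t + (m : ZMod (2 * S.r)) + 1) ∈
          s(g (b.f ((m : ZMod (2 * S.r)) + 1)), g (b.f ((m : ZMod (2 * S.r)) + 1 + 1))) := by
        rw [← B]; exact Sym2.mem_mk_left _ _
      rcases edges_at d hmem _ hin with hcase | hcase
      · rcases Sym2.eq_iff.mp hcase with ⟨-, hgood⟩ | ⟨hbad, -⟩
        · rw [show t + ((m : ZMod (2 * S.r)) + 1) + 1 = t + (m : ZMod (2 * S.r)) + 1 + 1 by ring]
          exact hgood
        · exfalso
          have := d.inj (B.symm.trans hbad)
          exact h1 (left_eq_add.mp this)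
      · rcases Sym2.eq_iff.mp hcase with ⟨hbad, -⟩ | ⟨-, hbad⟩
        · exfalso
          have := d.inj (B.symm.trans hbad)
          exact h1 (sub_eq_self.mp this.symm)
        · exfalso
          rw [show t + (m : ZMod (2 * S.r)) + 1 - 1 = t + (m : ZMod (2 * S.r)) by ring] at hbad
          have := b.inj (g.toEquiv.injective (hbad.trans A.symm))
          exact h2 (by linear_combination this)
  intro i
  have hiv : ((i.val : ℕ) : ZMod (2 * S.r)) = i := ZMod.natCast_rightInverse i
  have hk := (key i.val).1
  rw [hiv] at hk
  exact hk

lemma follow_bwd (S : Setup V) (h1 : (1 : ZMod (2 * S.r)) ≠ 0) (h2 : (2 : ZMod (2 * S.r)) ≠ 0)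
    (g : S.Γ ≃g S.Γ) (hg : g ∈ S.G) (b d : AltCycle S.Γ S.O (2 * S.r)) (t : ZMod (2 * S.r))
    (hE : cycEdges (imageCycle S g hg b) = cycEdges d)
    (h0 : g (b.f 0) = d.f t) (hs : g (b.f 1) = d.f (t - 1)) :
    ∀ i, g (b.f i) = d.f (t - i) := by
  have hE' : cycEdges (imageCycle S g hg b) = cycEdges (revAlt d) := by
    rw [cycEdges_revAlt]; exact hE
  have h0' : g (b.f 0) = (revAlt d).f (-t) := by
    show _ = d.f (-(-t)); rw [neg_neg]; exact h0
  have hs' : g (b.f 1) = (revAlt d).f (-t + 1) := by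
    show _ = d.f (-(-t + 1)); rw [show -(-t + 1) = t - 1 by ring]; exact hs
  intro i
  have hfin := follow S h1 h2 g hg b (revAlt d) (-t) hE' h0' hs' i
  rw [hfin]
  show d.f (-(-t + i)) = d.f (t - i)
  rw [show -(-t + i) = t - i by ring]

lemma dichotomy (S : Setup V) (h1 : (1 : ZMod (2 * S.r)) ≠ 0) (h2 : (2 : ZMod (2 * S.r)) ≠ 0)
    (g : S.Γ ≃g S.Γ) (hg : g ∈ S.G) (b d : AltCycle S.Γ S.O (2 * S.r)) (t : ZMod (2 * S.r))
    (hE : cycEdges (imageCycle S g hg b) = cycEdges d)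
    (h0 : g (b.f 0) = d.f t) :
    (∀ i, g (b.f i) = d.f (t + i)) ∨ (∀ i, g (b.f i) = d.f (t - i)) := by
  have hmem : s(g (b.f 0), g (b.f (0 + 1))) ∈ cycEdges d := by
    rw [← hE]; exact ⟨0, rfl⟩
  rw [zero_add] at hmem
  have hin : d.f t ∈ s(g (b.f 0), g (b.f 1)) := by
    rw [← h0]; exact Sym2.mem_mk_left _ _
  rcases edges_at d hmem t hin with hcase | hcase
  · rcases Sym2.eq_iff.mp hcase with ⟨-, hgood⟩ | ⟨hbad, -⟩
    · exact Or.inl (follow S h1 h2 g hg b d t hE h0 hgood)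
    · exfalso
      have := d.inj (h0.symm.trans hbad)
      exact h1 (left_eq_add.mp this)
  · rcases Sym2.eq_iff.mp hcase with ⟨hbad, -⟩ | ⟨-, hgood⟩
    · exfalso
      have := d.inj (h0.symm.trans hbad)
      exact h1 (sub_eq_self.mp this.symm)
    · exact Or.inr (follow_bwd S h1 h2 g hg b d t hE h0 hgood)

lemma two_le_r (S : Setup V) (b b' : AltCycle S.Γ S.O (2 * S.r))
    (hne : cycEdges b ≠ cycEdges b') (h00 : b.f 0 = b'.f 0) : 2 ≤ S.r := by
  have : Finite V := S.finite
  have hr := S.r_pos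
  haveI : NeZero (2 * S.r) := ⟨by omega⟩
  by_contra hcon
  have h2z : (2 : ZMod (2 * S.r)) = 0 := by
    have h2n : ((2 : ℕ) : ZMod (2 * S.r)) = 0 :=
      (ZMod.natCast_eq_zero_iff 2 (2 * S.r)).mpr ⟨1, by omega⟩
    exact_mod_cast h2n
  have h1z : (1 : ZMod (2 * S.r)) ≠ 0 := by
    intro h
    have hd : (2 * S.r) ∣ 1 := (ZMod.natCast_eq_zero_iff 1 (2 * S.r)).mp (by exact_mod_cast h)
    have := Nat.le_of_dvd one_pos hd
    omega
  set v := b.f 0 with hv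
  have hcard : ({b.f 1, b'.f 1} : Set V).ncard < (S.Γ.neighborSet v).ncard := by
    rw [S.tetra]
    have t1 := Set.ncard_insert_le (b.f 1) ({b'.f 1} : Set V)
    have t3 : ({b'.f 1} : Set V).ncard = 1 := Set.ncard_singleton _
    omega
  obtain ⟨z, hz, hznot⟩ := Set.exists_mem_notMem_of_ncard_lt_ncard hcard (Set.toFinite _)
  have hadj : S.Γ.Adj v z := hz
  have hvz : v ≠ z := S.Γ.ne_of_adj hadj
  have e0 : (if (0 : ZMod (2 * S.r)) = 0 then v else z) = v := if_pos rfl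
  have e1 : (if (1 : ZMod (2 * S.r)) = 0 then v else z) = z := if_neg h1z
  have hall : ∀ i : ZMod (2 * S.r), i = 0 ∨ i = 1 := by
    intro i
    have hv2 := ZMod.val_lt i
    have h01 : i.val = 0 ∨ i.val = 1 := by omega
    rcases h01 with h | h
    · left
      have hh := (ZMod.natCast_rightInverse (n := 2 * S.r)) i
      rw [h] at hh
      exact_mod_cast hh.symm
    · right
      have hh := (ZMod.natCast_rightInverse (n := 2 * S.r)) i
      rw [h] at hh
      exact_mod_cast hh.symm
  have h11 : (1 : ZMod (2 * S.r)) + 1 = 0 := by rw [one_add_one_eq_two, h2z]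
  let d2 : AltCycle S.Γ S.O (2 * S.r) :=
    { f := fun i => if i = 0 then v else z
      inj := by
        intro a a' haa
        rcases hall a with ha | ha <;> rcases hall a' with ha' | ha'
        · rw [ha, ha']
        · rw [ha, ha'] at haa
          change (if (0 : ZMod (2 * S.r)) = 0 then v else z)
            = (if (1 : ZMod (2 * S.r)) = 0 then v else z) at haa
          rw [e0, e1] at haa
          exact absurd haa hvz
        · rw [ha, ha'] at haa
          change (if (1 : ZMod (2 * S.r)) = 0 then v else z)
            = (if (0 : ZMod (2 * S.r)) = 0 then v else z) at haa
          rw [e0, e1] at haa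
          exact absurd haa.symm hvz
        · rw [ha, ha']
      adj := by
        intro i
        rcases hall i with hi | hi
        · rw [hi]
          show S.Γ.Adj (if (0 : ZMod (2 * S.r)) = 0 then v else z)
            (if (0 : ZMod (2 * S.r)) + 1 = 0 then v else z)
          rw [zero_add, e0, e1]
          exact hadj
        · rw [hi]
          show S.Γ.Adj (if (1 : ZMod (2 * S.r)) = 0 then v else z)
            (if (1 : ZMod (2 * S.r)) + 1 = 0 then v else z)
          rw [h11, e1]
          rw [if_pos rfl]
          exact hadj.symm
      alt := by
        intro i
        have hi2 : i + 2 = i := by rw [h2z, add_zero]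
        rw [hi2] }
  have hd2f0 : d2.f 0 = v := e0
  have hd2f1 : d2.f 1 = z := e1
  have hd2e : s(v, z) ∈ cycEdges d2 := by
    refine ⟨0, ?_⟩
    show s(d2.f 0, d2.f (0 + 1)) = s(v, z)
    rw [zero_add, hd2f0, hd2f1]
  have hne2 : cycEdges d2 ≠ cycEdges b := by
    intro hEq
    rw [hEq] at hd2e
    obtain ⟨k, hk⟩ := hd2e
    rcases hall k with hk0 | hk1
    · rw [hk0] at hk
      change s(b.f 0, b.f (0 + 1)) = s(v, z) at hk
      rw [zero_add] at hk
      rcases Sym2.eq_iff.mp hk with ⟨-, hz2⟩ | ⟨hz2, -⟩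
      · exact hznot (Or.inl hz2.symm)
      · exact hvz hz2
    · rw [hk1] at hk
      change s(b.f 1, b.f (1 + 1)) = s(v, z) at hk
      rw [h11] at hk
      rcases Sym2.eq_iff.mp hk with ⟨-, hz3⟩ | ⟨hz2, -⟩
      · exact hvz hz3
      · exact hznot (Or.inl hz2.symm)
  have hne2' : cycEdges d2 ≠ cycEdges b' := by
    intro hEq
    rw [hEq] at hd2e
    obtain ⟨k, hk⟩ := hd2e
    have hb'0 : b'.f 0 = v := h00.symm
    rcases hall k with hk0 | hk1
    · rw [hk0] at hk
      change s(b'.f 0, b'.f (0 + 1)) = s(v, z) at hk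
      rw [zero_add] at hk
      rcases Sym2.eq_iff.mp hk with ⟨-, hz2⟩ | ⟨hz2, -⟩
      · exact hznot (Or.inr hz2.symm)
      · exact hvz (hb'0.symm.trans hz2)
    · rw [hk1] at hk
      change s(b'.f 1, b'.f (1 + 1)) = s(v, z) at hk
      rw [h11] at hk
      rcases Sym2.eq_iff.mp hk with ⟨-, hz3⟩ | ⟨hz2, -⟩
      · exact hvz (hb'0.symm.trans hz3)
      · exact hznot (Or.inr hz2.symm)
  have hsub : ({cycEdges b, cycEdges b', cycEdges d2} : Set (Set (Sym2 V))) ⊆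
      {E : Set (Sym2 V) | IsAltEdgeSet S.Γ S.O (2 * S.r) E ∧ v ∈ suppOf E} := by
    rintro E (rfl | rfl | rfl)
    · exact ⟨⟨b, rfl⟩, mem_supp_of_mem_verts b ⟨0, rfl⟩⟩
    · exact ⟨⟨b', rfl⟩, mem_supp_of_mem_verts b' ⟨0, h00.symm⟩⟩
    · exact ⟨⟨d2, rfl⟩, mem_supp_of_mem_verts d2 ⟨0, hd2f0⟩⟩
  have h3 : ({cycEdges b, cycEdges b', cycEdges d2} : Set (Set (Sym2 V))).ncard = 3 := by
    rw [Set.ncard_insert_of_notMem (by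
      rintro (h | h)
      · exact hne h
      · exact hne2 h.symm) (Set.toFinite _)]
    rw [Set.ncard_pair (fun h => hne2' h.symm)]
  have hle := Set.ncard_le_ncard hsub (Set.toFinite _)
  rw [h3, S.alt_cover v] at hle
  omega
lemma engine (S : Setup V) (h1 : (1 : ZMod (2 * S.r)) ≠ 0) (h2 : (2 : ZMod (2 * S.r)) ≠ 0)
    (R : V → V → Prop)
    (hRinv : ∀ g : S.Γ ≃g S.Γ, g ∈ S.G → ∀ u w : V, R u w → R (g u) (g w))
    (hRorb : ∀ u w u' w' : V, R u w → R u' w' →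
      ∃ g : S.Γ ≃g S.Γ, g ∈ S.G ∧ g u = u' ∧ g w = w')
    (hRpair : ∀ (d : AltCycle S.Γ S.O (2 * S.r)) (t : ZMod (2 * S.r)),
      R (d.f t) (d.f (t + 1)) ↔ R (d.f t) (d.f (t - 1)))
    (b b' : AltCycle S.Γ S.O (2 * S.r)) (hne : cycEdges b ≠ cycEdges b')
    (h00 : b.f 0 = b'.f 0) (hR1 : R (b.f 0) (b.f 1))
    (p q : ZMod (2 * S.r)) (hx : b.f p = b'.f q) :
    (∃ τ : V → V, (∀ i, τ (b.f i) = b.f (i + 2 * p)) ∧ (∀ j, τ (b'.f j) = b'.f (j + 2 * q)))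
      ∨ 2 * p = 0 := by
  obtain ⟨g0, hg0, hg0v⟩ := S.hat.1 (b.f 0) (b'.f q)
  have hxb : b'.f q ∈ cycVerts b := ⟨p, hx⟩
  have hxb' : b'.f q ∈ cycVerts b' := ⟨q, rfl⟩
  have hxim0 : b'.f q ∈ cycVerts (imageCycle S g0 hg0 b) := ⟨0, hg0v⟩
  rcases pair_at S b b' hne hxb hxb' _ hxim0 with hEb | hEb'
  · -- Case A : the image of b under g0 is b itself
    have hg0p : g0 (b.f 0) = b.f p := hg0v.trans hx.symm
    have hRx : R (b.f p) (b.f (p + 1)) := by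
      have hR0 : R (g0 (b.f 0)) (g0 (b.f 1)) := hRinv g0 hg0 _ _ hR1
      rcases dichotomy S h1 h2 g0 hg0 b b p hEb hg0p with hf | hf
      · rw [hg0p, hf 1] at hR0
        exact hR0
      · rw [hg0p, hf 1] at hR0
        exact (hRpair b p).mpr hR0
    obtain ⟨g, hg, hgv, hg1⟩ := hRorb _ _ _ _ hR1 hRx
    have hxim : b'.f q ∈ cycVerts (imageCycle S g hg b) := ⟨0, hgv.trans hx⟩
    have hEg : cycEdges (imageCycle S g hg b) = cycEdges b := by
      rcases pair_at S b b' hne hxb hxb' _ hxim with h | h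
      · exact h
      · exfalso
        have he1 : s(b.f p, b.f (p + 1)) ∈ cycEdges (imageCycle S g hg b) := by
          refine ⟨0, ?_⟩
          show s(g (b.f 0), g (b.f (0 + 1))) = _
          rw [zero_add, hgv, hg1]
        rw [h] at he1
        exact no_shared_edge S b b' hne ⟨p, rfl⟩ he1
    have hfb := follow S h1 h2 g hg b b p hEg hgv hg1
    have hxim' : b'.f q ∈ cycVerts (imageCycle S g hg b') := ⟨0, by
      show g (b'.f 0) = _
      rw [← h00, hgv, hx]⟩
    have hEg' : cycEdges (imageCycle S g hg b') = cycEdges b' := by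
      rcases pair_at S b b' hne hxb hxb' _ hxim' with h | h
      · exfalso
        have him := cycEdges_imageCycle S g hg b'
        have him2 := cycEdges_imageCycle S g hg b
        have hA : Sym2.map (⇑g) '' cycEdges b' = cycEdges b := by rw [← him]; exact h
        have hB : Sym2.map (⇑g) '' cycEdges b = cycEdges b := by rw [← him2]; exact hEg
        have hinj : Function.Injective (Sym2.map (⇑g)) := Sym2.map.injective g.toEquiv.injective
        exact hne (Set.image_injective.mpr hinj (hB.trans hA.symm))
      · exact h
    have hg'0 : g (b'.f 0) = b'.f q := by rw [← h00, hgv, hx]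
    rcases dichotomy S h1 h2 g hg b' b' q hEg' hg'0 with hf' | hf'
    · left
      refine ⟨fun z => g (g z), fun i => ?_, fun j => ?_⟩
      · show g (g (b.f i)) = b.f (i + 2 * p)
        rw [hfb i, hfb (p + i), show p + (p + i) = i + 2 * p by ring]
      · show g (g (b'.f j)) = b'.f (j + 2 * q)
        rw [hf' j, hf' (q + j), show q + (q + j) = j + 2 * q by ring]
    · right
      have e1 : g (g (b.f 0)) = b.f (p + (p + 0)) := by rw [hfb 0, hfb (p + 0)]
      have e2 : g (g (b'.f 0)) = b'.f (q - (q - 0)) := by rw [hf' 0, hf' (q - 0)]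
      rw [h00] at e1
      have hcmp : b.f (p + (p + 0)) = b'.f (q - (q - 0)) := by rw [← e1, ← e2]
      rw [show q - (q - 0) = 0 by ring, ← h00] at hcmp
      have h2p := b.inj hcmp
      linear_combination h2p
  · -- Case B : the image of b under g0 is b'
    have hRx : R (b'.f q) (b'.f (q + 1)) ∧ R (b'.f q) (b'.f (q - 1)) := by
      have hR0 : R (g0 (b.f 0)) (g0 (b.f 1)) := hRinv g0 hg0 _ _ hR1
      rcases dichotomy S h1 h2 g0 hg0 b b' q hEb' hg0v with hf | hf
      · rw [hg0v, hf 1] at hR0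
        exact ⟨hR0, (hRpair b' q).mp hR0⟩
      · rw [hg0v, hf 1] at hR0
        exact ⟨(hRpair b' q).mpr hR0, hR0⟩
    obtain ⟨g, hg, hgv, hg1⟩ := hRorb _ _ _ _ hR1 hRx.1
    obtain ⟨g2, hg2, hg2v, hg21⟩ := hRorb _ _ _ _ hR1 hRx.2
    have hxim : b'.f q ∈ cycVerts (imageCycle S g hg b) := ⟨0, hgv⟩
    have hEg : cycEdges (imageCycle S g hg b) = cycEdges b' := by
      rcases pair_at S b b' hne hxb hxb' _ hxim with h | h
      · exfalso
        have he1 : s(b'.f q, b'.f (q + 1)) ∈ cycEdges (imageCycle S g hg b) := by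
          refine ⟨0, ?_⟩
          show s(g (b.f 0), g (b.f (0 + 1))) = _
          rw [zero_add, hgv, hg1]
        rw [h] at he1
        exact no_shared_edge S b b' hne he1 ⟨q, rfl⟩
      · exact h
    have hxim2 : b'.f q ∈ cycVerts (imageCycle S g2 hg2 b) := ⟨0, hg2v⟩
    have hEg2 : cycEdges (imageCycle S g2 hg2 b) = cycEdges b' := by
      rcases pair_at S b b' hne hxb hxb' _ hxim2 with h | h
      · exfalso
        have he1 : s(b'.f q, b'.f (q - 1)) ∈ cycEdges (imageCycle S g2 hg2 b) := by
          refine ⟨0, ?_⟩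
          show s(g2 (b.f 0), g2 (b.f (0 + 1))) = _
          rw [zero_add, hg2v, hg21]
        rw [h] at he1
        refine no_shared_edge S b b' hne he1 ⟨q - 1, ?_⟩
        show s(b'.f (q - 1), b'.f (q - 1 + 1)) = _
        rw [show q - 1 + 1 = q by ring]
        exact Sym2.eq_swap
      · exact h
    have hfb : ∀ i, g (b.f i) = b'.f (q + i) := follow S h1 h2 g hg b b' q hEg hgv hg1
    have hfb2 : ∀ i, g2 (b.f i) = b'.f (q - i) :=
      follow_bwd S h1 h2 g2 hg2 b b' q hEg2 hg2v hg21
    have hxim' : b'.f q ∈ cycVerts (imageCycle S g hg b') := ⟨0, by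
      show g (b'.f 0) = _
      rw [← h00, hgv]⟩
    have hEg' : cycEdges (imageCycle S g hg b') = cycEdges b := by
      rcases pair_at S b b' hne hxb hxb' _ hxim' with h | h
      · exact h
      · exfalso
        have him := cycEdges_imageCycle S g hg b'
        have him2 := cycEdges_imageCycle S g hg b
        have hA : Sym2.map (⇑g) '' cycEdges b' = cycEdges b' := by rw [← him]; exact h
        have hB : Sym2.map (⇑g) '' cycEdges b = cycEdges b' := by rw [← him2]; exact hEg
        have hinj : Function.Injective (Sym2.map (⇑g)) := Sym2.map.injective g.toEquiv.injective
        exact hne (Set.image_injective.mpr hinj (hB.trans hA.symm))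
    have hxim2' : b'.f q ∈ cycVerts (imageCycle S g2 hg2 b') := ⟨0, by
      show g2 (b'.f 0) = _
      rw [← h00, hg2v]⟩
    have hEg2' : cycEdges (imageCycle S g2 hg2 b') = cycEdges b := by
      rcases pair_at S b b' hne hxb hxb' _ hxim2' with h | h
      · exact h
      · exfalso
        have him := cycEdges_imageCycle S g2 hg2 b'
        have him2 := cycEdges_imageCycle S g2 hg2 b
        have hA : Sym2.map (⇑g2) '' cycEdges b' = cycEdges b' := by rw [← him]; exact h
        have hB : Sym2.map (⇑g2) '' cycEdges b = cycEdges b' := by rw [← him2]; exact hEg2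
        have hinj : Function.Injective (Sym2.map (⇑g2)) :=
          Sym2.map.injective g2.toEquiv.injective
        exact hne (Set.image_injective.mpr hinj (hB.trans hA.symm))
    have hgv' : g (b'.f 0) = b.f p := by rw [← h00, hgv, ← hx]
    have hg2v' : g2 (b'.f 0) = b.f p := by rw [← h00, hg2v, ← hx]
    have hsymb : ∀ w, g2.symm (b'.f w) = b.f (q - w) := by
      intro w
      have hh := hfb2 (q - w)
      rw [show q - (q - w) = w by ring] at hh
      rw [← hh]
      exact g2.symm_apply_apply _
    rcases dichotomy S h1 h2 g hg b' b p hEg' hgv' with hA | hA <;>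
      rcases dichotomy S h1 h2 g2 hg2 b' b p hEg2' hg2v' with hB | hB
    · -- (fwd, fwd) : reflection fixing b' pointwise, 2p = 0
      right
      have hsymb' : ∀ w, g2.symm (b.f w) = b'.f (w - p) := by
        intro w
        have hh := hB (w - p)
        rw [show p + (w - p) = w by ring] at hh
        rw [← hh]
        exact g2.symm_apply_apply _
      have c1 : g2.symm (g (b.f p)) = b.f (-p) := by
        rw [hfb p, hsymb (q + p), show q - (q + p) = -p by ring]
      have c2 : g2.symm (g (b'.f q)) = b'.f q := by
        rw [hA q, hsymb' (p + q), show p + q - p = q by ring]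
      have hpq : b.f (-p) = b'.f q := by rw [← c1, ← c2, hx]
      rw [← hx] at hpq
      have hfin := b.inj hpq
      linear_combination -hfin
    · -- (fwd, bwd) : rotation by (2p, 2q)
      left
      have hsymb' : ∀ w, g2.symm (b.f w) = b'.f (p - w) := by
        intro w
        have hh := hB (p - w)
        rw [show p - (p - w) = w by ring] at hh
        rw [← hh]
        exact g2.symm_apply_apply _
      refine ⟨fun z => g (g2.symm (g2.symm (g z))), fun i => ?_, fun j => ?_⟩
      · show g (g2.symm (g2.symm (g (b.f i)))) = b.f (i + 2 * p)
        rw [hfb i, hsymb (q + i), show q - (q + i) = -i by ring,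
          hsymb' (-i), show p - -i = p + i by ring, hA (p + i),
          show p + (p + i) = i + 2 * p by ring]
      · show g (g2.symm (g2.symm (g (b'.f j)))) = b'.f (j + 2 * q)
        rw [hA j, hsymb' (p + j), show p - (p + j) = -j by ring,
          hsymb (-j), show q - -j = q + j by ring, hfb (q + j),
          show q + (q + j) = j + 2 * q by ring]
    · -- (bwd, fwd) : rotation by (2p, 2q)
      left
      have hsymb' : ∀ w, g2.symm (b.f w) = b'.f (w - p) := by
        intro w
        have hh := hB (w - p)
        rw [show p + (w - p) = w by ring] at hh
        rw [← hh]
        exact g2.symm_apply_apply _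
      refine ⟨fun z => g (g2.symm (g2.symm (g z))), fun i => ?_, fun j => ?_⟩
      · show g (g2.symm (g2.symm (g (b.f i)))) = b.f (i + 2 * p)
        rw [hfb i, hsymb (q + i), show q - (q + i) = -i by ring,
          hsymb' (-i), show -i - p = -(i + p) by ring, hA (-(i + p)),
          show p - -(i + p) = i + 2 * p by ring]
      · show g (g2.symm (g2.symm (g (b'.f j)))) = b'.f (j + 2 * q)
        rw [hA j, hsymb' (p - j), show p - j - p = -j by ring,
          hsymb (-j), show q - -j = q + j by ring, hfb (q + j),
          show q + (q + j) = j + 2 * q by ring]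
    · -- (bwd, bwd) : 2p = 0
      right
      have hsymb' : ∀ w, g2.symm (b.f w) = b'.f (p - w) := by
        intro w
        have hh := hB (p - w)
        rw [show p - (p - w) = w by ring] at hh
        rw [← hh]
        exact g2.symm_apply_apply _
      have c1 : g2.symm (g (b.f p)) = b.f (-p) := by
        rw [hfb p, hsymb (q + p), show q - (q + p) = -p by ring]
      have c2 : g2.symm (g (b'.f q)) = b'.f q := by
        rw [hA q, hsymb' (p - q), show p - (p - q) = q by ring]
      have hpq : b.f (-p) = b'.f q := by rw [← c1, ← c2, hx]
      rw [← hx] at hpq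
      have hfin := b.inj hpq
      linear_combination -hfin

lemma engine_total (S : Setup V) (h1 : (1 : ZMod (2 * S.r)) ≠ 0)
    (h2 : (2 : ZMod (2 * S.r)) ≠ 0)
    (b b' : AltCycle S.Γ S.O (2 * S.r)) (hne : cycEdges b ≠ cycEdges b')
    (h00 : b.f 0 = b'.f 0) (p q : ZMod (2 * S.r)) (hx : b.f p = b'.f q) :
    (∃ τ : V → V, (∀ i, τ (b.f i) = b.f (i + 2 * p)) ∧ (∀ j, τ (b'.f j) = b'.f (j + 2 * q)))
      ∨ 2 * p = 0 := by
  have hadj01 : S.Γ.Adj (b.f 0) (b.f 1) := by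
    have := b.adj 0
    rwa [zero_add] at this
  rcases o_total S hadj01 with hdir | hdir
  · refine engine S h1 h2 S.O (fun g hg u w h => S.O_inv g hg h)
      (fun u w u' w' h h' => ?_) (fun d t => ?_) b b' hne h00 hdir p q hx
    · obtain ⟨g, hg, h3, h4⟩ := S.O_orbit h h'
      exact ⟨g, hg, h3, h4⟩
    · constructor
      · intro hO
        have halt := (d.alt (t - 1))
        rw [show t - 1 + 1 = t by ring, show t - 1 + 2 = t + 1 by ring] at halt
        have h5 : ¬ S.O (d.f (t + 1)) (d.f t) := (S.O_choice (d.adj t)).mp hO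
        have h6 : ¬ S.O (d.f (t - 1)) (d.f t) := fun hc => h5 (halt.mp hc)
        exact (S.O_choice (by
          have := d.adj (t - 1)
          rw [show t - 1 + 1 = t by ring] at this
          exact this.symm)).mpr h6
      · intro hO
        have halt := (d.alt (t - 1))
        rw [show t - 1 + 1 = t by ring, show t - 1 + 2 = t + 1 by ring] at halt
        have hadj : S.Γ.Adj (d.f (t - 1)) (d.f t) := by
          have := d.adj (t - 1)
          rw [show t - 1 + 1 = t by ring] at this
          exact this
        have h6 : ¬ S.O (d.f (t - 1)) (d.f t) := (S.O_choice hadj.symm).mp hO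
        have h5 : ¬ S.O (d.f (t + 1)) (d.f t) := fun hc => h6 (halt.mpr hc)
        exact (S.O_choice (d.adj t)).mpr h5
  · refine engine S h1 h2 (fun u w => S.O w u) (fun g hg u w h => S.O_inv g hg h)
      (fun u w u' w' h h' => ?_) (fun d t => ?_) b b' hne h00 hdir p q hx
    · obtain ⟨g, hg, h3, h4⟩ := S.O_orbit h h'
      exact ⟨g, hg, h4, h3⟩
    · have halt := (d.alt (t - 1))
      rw [show t - 1 + 1 = t by ring, show t - 1 + 2 = t + 1 by ring] at halt
      exact halt.symm

end HATAux


open HalfArc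

open HATAux in
/-- Lemma 3.1 of the paper. -/
theorem statement_0 {V : Type*} (S : Setup V) (J : JumpData S)
    (hmem : J.c.f ((J.ell : ℕ)) = J.c'.f ((J.qt * J.ell : ℕ))) :
    (∀ i : ℕ, i < S.att → J.c.f ((i * J.ell : ℕ)) = J.c'.f ((i * J.qt * J.ell : ℕ))) ∧
    (J.c'.f ((J.ell : ℕ)) = J.c.f ((J.qh * J.ell : ℕ)) →
      ∀ i : ℕ, i < S.att → J.c'.f ((i * J.ell : ℕ)) = J.c.f ((i * J.qh * J.ell : ℕ))) ∧
    (J.c'.f ((J.ell : ℕ)) = J.c.f (-((J.qh * J.ell : ℕ) : ZMod (2 * S.r))) →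
      ∀ i : ℕ, i < S.att →
        J.c'.f ((i * J.ell : ℕ)) = J.c.f (-((i * J.qh * J.ell : ℕ) : ZMod (2 * S.r)))) := by
  have h00 : J.c.f 0 = J.c'.f 0 := J.hc.trans J.hc'.symm
  have hr2 : 2 ≤ S.r := two_le_r S J.c J.c' J.hne h00
  have h1 : (1 : ZMod (2 * S.r)) ≠ 0 := by
    intro h
    have hd := (ZMod.natCast_eq_zero_iff 1 (2 * S.r)).mp (by exact_mod_cast h)
    have := Nat.le_of_dvd one_pos hd
    omega
  have h2 : (2 : ZMod (2 * S.r)) ≠ 0 := by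
    intro h
    have hd := (ZMod.natCast_eq_zero_iff 2 (2 * S.r)).mp (by exact_mod_cast h)
    have := Nat.le_of_dvd two_pos hd
    omega
  have hellpos : 0 < J.ell := by
    rcases Nat.eq_zero_or_pos J.ell with h | h
    · exfalso
      have hJ := J.hell
      rw [h, mul_zero] at hJ
      have := S.r_pos
      omega
    · exact h
  have fallback : ((2 * J.ell : ℕ) : ZMod (2 * S.r)) = 0 → S.att ≤ 2 := by
    intro hz
    have hd : (2 * S.r) ∣ 2 * J.ell := (ZMod.natCast_eq_zero_iff _ _).mp hz
    rw [← J.hell] at hd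
    have := (Nat.mul_dvd_mul_iff_right hellpos).mp hd
    exact Nat.le_of_dvd two_pos this
  refine ⟨?_, ?_, ?_⟩
  · -- first statement
    rcases engine_total S h1 h2 J.c J.c' J.hne h00
        ((J.ell : ℕ) : ZMod (2 * S.r)) ((J.qt * J.ell : ℕ) : ZMod (2 * S.r)) hmem with
      ⟨τ, hτ1, hτ2⟩ | hz
    · have main : ∀ m : ℕ, J.c.f ((m * J.ell : ℕ)) = J.c'.f ((m * J.qt * J.ell : ℕ)) := by
        intro m
        induction m using Nat.twoStepInduction with
        | zero => simpa using h00
        | one => simpa using hmem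
        | more m ih _ =>
          have e1 : (((m + 2) * J.ell : ℕ) : ZMod (2 * S.r))
              = ((m * J.ell : ℕ) : ZMod (2 * S.r)) + 2 * ((J.ell : ℕ) : ZMod (2 * S.r)) := by
            push_cast; ring
          have e2 : (((m + 2) * J.qt * J.ell : ℕ) : ZMod (2 * S.r))
              = ((m * J.qt * J.ell : ℕ) : ZMod (2 * S.r))
                + 2 * ((J.qt * J.ell : ℕ) : ZMod (2 * S.r)) := by
            push_cast; ring
          rw [e1, e2, ← hτ1, ← hτ2, ih]
      exact fun i _ => main i
    · intro i hi
      have hatt := fallback (by push_cast; exact hz)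
      have hi01 : i = 0 ∨ i = 1 := by omega
      rcases hi01 with rfl | rfl
      · simpa using h00
      · simpa using hmem
  · -- second statement
    intro hyp2
    rcases engine_total S h1 h2 J.c' J.c J.hne.symm h00.symm
        ((J.ell : ℕ) : ZMod (2 * S.r)) ((J.qh * J.ell : ℕ) : ZMod (2 * S.r)) hyp2 with
      ⟨τ, hτ1, hτ2⟩ | hz
    · have main : ∀ m : ℕ, J.c'.f ((m * J.ell : ℕ)) = J.c.f ((m * J.qh * J.ell : ℕ)) := by
        intro m
        induction m using Nat.twoStepInduction with
        | zero => simpa using h00.symm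
        | one => simpa using hyp2
        | more m ih _ =>
          have e1 : (((m + 2) * J.ell : ℕ) : ZMod (2 * S.r))
              = ((m * J.ell : ℕ) : ZMod (2 * S.r)) + 2 * ((J.ell : ℕ) : ZMod (2 * S.r)) := by
            push_cast; ring
          have e2 : (((m + 2) * J.qh * J.ell : ℕ) : ZMod (2 * S.r))
              = ((m * J.qh * J.ell : ℕ) : ZMod (2 * S.r))
                + 2 * ((J.qh * J.ell : ℕ) : ZMod (2 * S.r)) := by
            push_cast; ring
          rw [e1, e2, ← hτ1, ← hτ2, ih]
      exact fun i _ => main i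
    · intro i hi
      have hatt := fallback (by push_cast; exact hz)
      have hi01 : i = 0 ∨ i = 1 := by omega
      rcases hi01 with rfl | rfl
      · simpa using h00.symm
      · simpa using hyp2
  · -- third statement
    intro hyp3
    rcases engine_total S h1 h2 J.c' J.c J.hne.symm h00.symm
        ((J.ell : ℕ) : ZMod (2 * S.r)) (-((J.qh * J.ell : ℕ) : ZMod (2 * S.r))) hyp3 with
      ⟨τ, hτ1, hτ2⟩ | hz
    · have main : ∀ m : ℕ,
          J.c'.f ((m * J.ell : ℕ)) = J.c.f (-((m * J.qh * J.ell : ℕ) : ZMod (2 * S.r))) := by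
        intro m
        induction m using Nat.twoStepInduction with
        | zero => simpa using h00.symm
        | one => simpa using hyp3
        | more m ih _ =>
          have e1 : (((m + 2) * J.ell : ℕ) : ZMod (2 * S.r))
              = ((m * J.ell : ℕ) : ZMod (2 * S.r)) + 2 * ((J.ell : ℕ) : ZMod (2 * S.r)) := by
            push_cast; ring
          have e2 : (-(((m + 2) * J.qh * J.ell : ℕ) : ZMod (2 * S.r)))
              = (-((m * J.qh * J.ell : ℕ) : ZMod (2 * S.r)))
                + 2 * (-((J.qh * J.ell : ℕ) : ZMod (2 * S.r))) := by
            push_cast; ring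
          rw [e1, e2, ← hτ1, ← hτ2, ih]
      exact fun i _ => main i
    · intro i hi
      have hatt := fallback (by push_cast; exact hz)
      have hi01 : i = 0 ∨ i = 1 := by omega
      rcases hi01 with rfl | rfl
      · simpa using h00.symm
      · simpa using hyp3
end

section
/- Let Γ be a tetravalent G-half-arc-transitive graph for some G ≤ Aut(Γ) with att_G(Γ) < rad_G(Γ). Then the kernel K_G(Alt_G(Γ)) acts semiregularly on the vertices of Γ, i.e. every nontrivial element of K_G(Alt_G(Γ)) fixes no vertex of Γ. -/
/-! Common definitions for tetravalent half-arc-transitive graph theory. -/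

open SimpleGraph Set

open HalfArc


namespace StatementSevenAux

variable {V : Type*}

lemma suppOf_cycEdges {Γ : SimpleGraph V} {O : V → V → Prop} {n : ℕ}
    (c : AltCycle Γ O n) : suppOf (cycEdges c) = cycVerts c := by
  ext v
  constructor
  · rintro ⟨e, ⟨i, rfl⟩, hv⟩
    rcases Sym2.mem_iff.mp hv with h | h
    · exact ⟨i, h.symm⟩
    · exact ⟨i + 1, h.symm⟩
  · rintro ⟨i, rfl⟩
    exact ⟨s(c.f i, c.f (i + 1)), ⟨i, rfl⟩, Sym2.mem_mk_left _ _⟩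

lemma suppOf_map (φ : V → V) (E : Set (Sym2 V)) :
    suppOf (Sym2.map φ '' E) = φ '' suppOf E := by
  ext v
  constructor
  · rintro ⟨e, ⟨e₀, he₀, rfl⟩, hv⟩
    obtain ⟨u, hu, rfl⟩ := Sym2.mem_map.mp hv
    exact ⟨u, ⟨e₀, he₀, hu⟩, rfl⟩
  · rintro ⟨u, ⟨e, he, hu⟩, rfl⟩
    exact ⟨Sym2.map φ e, ⟨e, he, rfl⟩, Sym2.mem_map.mpr ⟨u, hu, rfl⟩⟩

lemma mem_suppOf_map {φ : V → V} {E : Set (Sym2 V)} {u : V} (h : u ∈ suppOf E) :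
    φ u ∈ suppOf (Sym2.map φ '' E) := by
  rw [suppOf_map]; exact ⟨u, h, rfl⟩

variable (S : Setup V)

lemma O_iff {g : S.Γ ≃g S.Γ} (hg : g ∈ S.G) (u v : V) :
    S.O u v ↔ S.O (g u) (g v) := by
  constructor
  · exact fun h => S.O_inv g hg h
  · intro h
    have h2 := S.O_inv g⁻¹ (S.G.inv_mem hg) h
    have e1 : (g⁻¹ : S.Γ ≃g S.Γ) (g u) = u := g.toEquiv.symm_apply_apply u
    have e2 : (g⁻¹ : S.Γ ≃g S.Γ) (g v) = v := g.toEquiv.symm_apply_apply v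
    rwa [e1, e2] at h2

/-- The image of an alternating cycle under an element of `G`. -/
def mapCycle {g : S.Γ ≃g S.Γ} (hg : g ∈ S.G) (c : AltCycle S.Γ S.O (2 * S.r)) :
    AltCycle S.Γ S.O (2 * S.r) where
  f := fun i => g (c.f i)
  inj := fun i j h => c.inj (g.toEquiv.injective h)
  adj := fun i => g.map_adj_iff.mpr (c.adj i)
  alt := fun i => by
    rw [← O_iff S hg, ← O_iff S hg]
    exact c.alt i

lemma cycEdges_mapCycle {g : S.Γ ≃g S.Γ} (hg : g ∈ S.G) (c : AltCycle S.Γ S.O (2 * S.r)) :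
    cycEdges (mapCycle S hg c) = Sym2.map (g : V → V) '' cycEdges c := by
  unfold cycEdges
  rw [← Set.range_comp]
  apply congrArg
  funext i
  exact (Sym2.map_pair_eq _ _ _).symm

lemma isAlt_map {g : S.Γ ≃g S.Γ} (hg : g ∈ S.G) {E : Set (Sym2 V)}
    (hE : IsAltEdgeSet S.Γ S.O (2 * S.r) E) :
    IsAltEdgeSet S.Γ S.O (2 * S.r) (Sym2.map (g : V → V) '' E) := by
  obtain ⟨c, rfl⟩ := hE
  exact ⟨mapCycle S hg c, cycEdges_mapCycle S hg c⟩

/-- Rotation of an alternating cycle. -/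
def rotCycle (c : AltCycle S.Γ S.O (2 * S.r)) (t : ZMod (2 * S.r)) :
    AltCycle S.Γ S.O (2 * S.r) where
  f := fun i => c.f (i + t)
  inj := fun i j h => by
    have := c.inj h
    exact add_right_cancel this
  adj := fun i => by
    have h := c.adj (i + t)
    rwa [show i + t + 1 = i + 1 + t by ring] at h
  alt := fun i => by
    have h := c.alt (i + t)
    rwa [show i + t + 1 = i + 1 + t by ring, show i + t + 2 = i + 2 + t by ring] at h

lemma two_ne_zero_zmod (hr : 2 ≤ S.r) : (2 : ZMod (2 * S.r)) ≠ 0 := by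
  intro h
  have h2 : ((2 : ℕ) : ZMod (2 * S.r)) = 0 := by exact_mod_cast h
  rw [ZMod.natCast_eq_zero_iff] at h2
  have := Nat.le_of_dvd (by norm_num) h2
  omega

/-- The "other" alternating cycle through a vertex. -/
lemma other_cycle {u : V} {A : Set (Sym2 V)}
    (hA : IsAltEdgeSet S.Γ S.O (2 * S.r) A) (hu : u ∈ suppOf A) :
    ∃ B, IsAltEdgeSet S.Γ S.O (2 * S.r) B ∧ u ∈ suppOf B ∧ B ≠ A ∧
      ∀ X, IsAltEdgeSet S.Γ S.O (2 * S.r) X → u ∈ suppOf X → X = A ∨ X = B := by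
  have h2 := S.alt_cover u
  rw [Set.ncard_eq_two] at h2
  obtain ⟨x, y, hxy, hset⟩ := h2
  have hAmem : A ∈ {E | IsAltEdgeSet S.Γ S.O (2 * S.r) E ∧ u ∈ suppOf E} := ⟨hA, hu⟩
  rw [hset] at hAmem
  have hxmem : x ∈ {E | IsAltEdgeSet S.Γ S.O (2 * S.r) E ∧ u ∈ suppOf E} := by
    rw [hset]; exact Set.mem_insert x {y}
  have hymem : y ∈ {E | IsAltEdgeSet S.Γ S.O (2 * S.r) E ∧ u ∈ suppOf E} := by
    rw [hset]; exact Set.mem_insert_of_mem x rfl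
  simp only [Set.mem_insert_iff, Set.mem_singleton_iff] at hAmem
  rcases hAmem with rfl | rfl
  · refine ⟨y, hymem.1, hymem.2, hxy.symm, fun X hX huX => ?_⟩
    have : X ∈ ({A, y} : Set (Set (Sym2 V))) := hset ▸ (⟨hX, huX⟩ : X ∈ {E | _ ∧ _})
    simpa using this
  · refine ⟨x, hxmem.1, hxmem.2, hxy, fun X hX huX => ?_⟩
    have : X ∈ ({x, A} : Set (Set (Sym2 V))) := hset ▸ (⟨hX, huX⟩ : X ∈ {E | _ ∧ _})
    rcases this with h | h
    · exact Or.inr h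
    · exact Or.inl h

/-- Every edge lies on some alternating cycle. -/
lemma exists_cycle_through_edge {u w : V} (h : S.Γ.Adj u w) :
    ∃ c : AltCycle S.Γ S.O (2 * S.r), s(u, w) ∈ cycEdges c := by
  have hne : {E | IsAltEdgeSet S.Γ S.O (2 * S.r) E ∧ u ∈ suppOf E}.Nonempty :=
    Set.nonempty_of_ncard_ne_zero (by rw [S.alt_cover u]; norm_num)
  obtain ⟨E0, hE0, -⟩ := hne
  obtain ⟨c0, rfl⟩ := hE0
  have adj0 : S.Γ.Adj (c0.f 0) (c0.f 1) := by simpa using c0.adj 0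
  obtain ⟨g, hgG, hcase⟩ := S.hat.2.1 adj0 h
  rcases hcase with ⟨h1, h2⟩ | ⟨h1, h2⟩
  · refine ⟨mapCycle S hgG c0, 0, ?_⟩
    show s(g (c0.f 0), g (c0.f (0 + 1))) = s(u, w)
    rw [zero_add, h1, h2]
  · refine ⟨mapCycle S hgG c0, 0, ?_⟩
    show s(g (c0.f 0), g (c0.f (0 + 1))) = s(u, w)
    rw [zero_add, h1, h2, Sym2.eq_swap]

lemma edges_at_vertex (hr : 2 ≤ S.r) (c : AltCycle S.Γ S.O (2 * S.r)) (i : ZMod (2 * S.r)) :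
    {e ∈ cycEdges c | c.f i ∈ e} =
      {s(c.f (i - 1), c.f i), s(c.f i, c.f (i + 1))} := by
  have h2 := two_ne_zero_zmod S hr
  ext e
  simp only [Set.mem_setOf_eq, Set.mem_insert_iff, Set.mem_singleton_iff]
  constructor
  · rintro ⟨⟨j, rfl⟩, hmem⟩
    rcases Sym2.mem_iff.mp hmem with h | h
    · right
      have : j = i := c.inj h.symm
      subst this; rfl
    · left
      have hji : j + 1 = i := c.inj h.symm
      have : j = i - 1 := by rw [← hji]; ring
      subst this
      show s(c.f (i - 1), c.f (i - 1 + 1)) = s(c.f (i - 1), c.f i)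
      rw [sub_add_cancel]
  · rintro (rfl | rfl)
    · refine ⟨⟨i - 1, ?_⟩, Sym2.mem_mk_right _ _⟩
      show s(c.f (i - 1), c.f (i - 1 + 1)) = s(c.f (i - 1), c.f i)
      rw [sub_add_cancel]
    · exact ⟨⟨i, rfl⟩, Sym2.mem_mk_left _ _⟩

lemma edges_at_vertex_ncard (hr : 2 ≤ S.r) (c : AltCycle S.Γ S.O (2 * S.r))
    (i : ZMod (2 * S.r)) : {e ∈ cycEdges c | c.f i ∈ e}.ncard = 2 := by
  rw [edges_at_vertex S hr c i]
  apply Set.ncard_pair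
  intro heq
  rcases Sym2.eq_iff.mp heq with ⟨ha, hb⟩ | ⟨ha, hb⟩
  · have : i - 1 = i := c.inj ha
    have : (1 : ZMod (2 * S.r)) = 0 := by linear_combination -this
    have h2 := two_ne_zero_zmod S hr
    apply h2
    linear_combination 2 * this
  · have h1 : i - 1 = i + 1 := c.inj ha
    apply two_ne_zero_zmod S hr
    linear_combination -h1

/-- Each edge lies on a unique alternating cycle (as an edge set). -/
lemma edge_unique (hr : 2 ≤ S.r) {E E' : Set (Sym2 V)}
    (hE : IsAltEdgeSet S.Γ S.O (2 * S.r) E) (hE' : IsAltEdgeSet S.Γ S.O (2 * S.r) E')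
    {e : Sym2 V} (heE : e ∈ E) (heE' : e ∈ E') : E = E' := by
  haveI := S.finite
  haveI : Finite (Sym2 V) := Finite.of_surjective (fun p : V × V => s(p.1, p.2))
    (fun z => z.ind (fun a b => ⟨(a, b), rfl⟩))
  by_contra hne
  obtain ⟨c, rfl⟩ := hE
  obtain ⟨i, hi⟩ := heE
  set u := c.f i with hu
  have hue : u ∈ e := by rw [← hi]; exact Sym2.mem_mk_left _ _
  -- u is on E'
  obtain ⟨c', hc'⟩ := id hE'
  have husupp' : u ∈ suppOf E' := ⟨e, heE', hue⟩
  have huvert' : u ∈ cycVerts c' := by rw [← suppOf_cycEdges c', hc']; exact husupp'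
  obtain ⟨i', hi'⟩ := huvert'
  -- the two cycles at u
  have husupp : u ∈ suppOf (cycEdges c) := by
    rw [suppOf_cycEdges]; exact ⟨i, rfl⟩
  obtain ⟨B, hB1, hB2, hB3, hB4⟩ := other_cycle S ⟨c, rfl⟩ husupp
  have hE'B : E' = B := by
    rcases hB4 E' hE' husupp' with h | h
    · exact absurd h.symm hne
    · exact h
  -- counting
  set A1 := {e' ∈ cycEdges c | u ∈ e'} with hA1
  set A2 := {e' ∈ E' | u ∈ e'} with hA2
  have hcard1 : A1.ncard = 2 := edges_at_vertex_ncard S hr c i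
  have hcard2 : A2.ncard = 2 := by
    rw [hA2, ← hc', ← hi']
    exact edges_at_vertex_ncard S hr c' i'
  have hinter : e ∈ A1 ∩ A2 := ⟨⟨⟨i, hi⟩, hue⟩, ⟨heE', hue⟩⟩
  have hun : (A1 ∪ A2).ncard + (A1 ∩ A2).ncard = 4 := by
    rw [Set.ncard_union_add_ncard_inter A1 A2 (Set.toFinite _) (Set.toFinite _),
      hcard1, hcard2]
  have hub : (A1 ∪ A2).ncard ≤ 3 := by
    have hpos : 0 < (A1 ∩ A2).ncard :=
      (Set.ncard_pos (Set.toFinite _)).mpr ⟨e, hinter⟩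
    omega
  -- lower bound via neighbors
  have hNsub : (fun w => s(u, w)) '' S.Γ.neighborSet u ⊆ A1 ∪ A2 := by
    rintro x ⟨w, hw, rfl⟩
    have hadj : S.Γ.Adj u w := hw
    obtain ⟨d, hd⟩ := exists_cycle_through_edge S hadj
    have hdsupp : u ∈ suppOf (cycEdges d) := ⟨s(u, w), hd, Sym2.mem_mk_left _ _⟩
    rcases hB4 (cycEdges d) ⟨d, rfl⟩ hdsupp with h | h
    · left; exact ⟨h ▸ hd, Sym2.mem_mk_left _ _⟩
    · right
      refine ⟨?_, Sym2.mem_mk_left _ _⟩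
      show s(u, w) ∈ E'
      rw [hE'B, ← h]
      exact hd
  have hNinj : Set.InjOn (fun w => s(u, w)) (S.Γ.neighborSet u) := by
    intro a ha b hb hab
    rcases Sym2.eq_iff.mp hab with ⟨-, h⟩ | ⟨h1, h2⟩
    · exact h
    · exact h2.trans h1
  have hNcard : ((fun w => s(u, w)) '' S.Γ.neighborSet u).ncard = 4 := by
    rw [Set.ncard_image_of_injOn hNinj, S.tetra u]
  have := Set.ncard_le_ncard hNsub (Set.toFinite _)
  omega

/-- Classification of cycle-preserving automorphisms: rotation or reflection. -/
lemma cycle_action (hr : 2 ≤ S.r) (c : AltCycle S.Γ S.O (2 * S.r)) (φ : S.Γ ≃g S.Γ)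
    (hfix : Sym2.map (φ : V → V) '' cycEdges c = cycEdges c) :
    (∃ k, ∀ i, φ (c.f i) = c.f (i + k)) ∨ (∃ k, ∀ i, φ (c.f i) = c.f (k - i)) := by
  haveI : NeZero (2 * S.r) := ⟨by omega⟩
  have h2 := two_ne_zero_zmod S hr
  have hv : (φ : V → V) '' cycVerts c = cycVerts c := by
    rw [← suppOf_cycEdges, ← suppOf_map, hfix]
  have hmem : ∀ i, φ (c.f i) ∈ cycVerts c := by
    intro i
    rw [← hv]
    exact ⟨c.f i, ⟨i, rfl⟩, rfl⟩
  choose σ hσ using hmem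
  -- hσ : ∀ i, c.f (σ i) = φ (c.f i)  (after unfolding range membership)
  have hσ' : ∀ i, c.f (σ i) = φ (c.f i) := hσ
  have step : ∀ i, σ (i + 1) = σ i + 1 ∨ σ (i + 1) = σ i - 1 := by
    intro i
    have hin : s((φ : V → V) (c.f i), (φ : V → V) (c.f (i + 1))) ∈ cycEdges c := by
      rw [← hfix]
      exact ⟨s(c.f i, c.f (i + 1)), ⟨i, rfl⟩, Sym2.map_pair_eq _ _ _⟩
    rw [← hσ' i, ← hσ' (i + 1)] at hin
    obtain ⟨j, hj⟩ := hin
    rcases Sym2.eq_iff.mp hj with ⟨ha, hb⟩ | ⟨ha, hb⟩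
    · left
      have h1 : j = σ i := c.inj ha
      have h2 : j + 1 = σ (i + 1) := c.inj hb
      rw [← h2, h1]
    · right
      have h1 : j = σ (i + 1) := c.inj ha
      have h2 : j + 1 = σ i := c.inj hb
      rw [← h1]
      linear_combination h2
  have collapse : ∀ i : ZMod (2 * S.r), σ (i + 1 + 1) = σ i → False := by
    intro i hh
    have : φ (c.f (i + 1 + 1)) = φ (c.f i) := by rw [← hσ', ← hσ', hh]
    have hfe : c.f (i + 1 + 1) = c.f i := φ.toEquiv.injective this
    have := c.inj hfe
    apply h2
    linear_combination this
  have prop : ∀ (e : ZMod (2 * S.r)), (e = 1 ∨ e = -1) →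
      ∀ i : ZMod (2 * S.r), σ (i + 1) = σ i + e → σ (i + 1 + 1) = σ (i + 1) + e := by
    intro e he i hstep
    rcases step (i + 1) with h | h
    · rcases he with rfl | rfl
      · exact h
      · exfalso
        apply collapse i
        rw [h, hstep]
        ring
    · rcases he with rfl | rfl
      · exfalso
        apply collapse i
        rw [h, hstep]
        ring
      · rw [h, hstep]
        ring
  -- choose the sign
  have hsign : ∃ e : ZMod (2 * S.r), (e = 1 ∨ e = -1) ∧ σ 1 = σ 0 + e := by
    rcases step 0 with h | h
    · exact ⟨1, Or.inl rfl, by rw [← h]; rw [zero_add]⟩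
    · exact ⟨-1, Or.inr rfl, by rw [show σ 0 + -1 = σ 0 - 1 by ring, ← h, zero_add]⟩
  obtain ⟨e, he, hbase⟩ := hsign
  have hnat : ∀ m : ℕ, σ ((m : ZMod (2 * S.r))) = σ 0 + e * m ∧
      σ ((m : ZMod (2 * S.r)) + 1) = σ ((m : ZMod (2 * S.r))) + e := by
    intro m
    induction m with
    | zero => simpa using hbase
    | succ m ih =>
      have hc : ((m + 1 : ℕ) : ZMod (2 * S.r)) = (m : ZMod (2 * S.r)) + 1 := by push_cast; ring
      constructor
      · rw [hc, ih.2, ih.1]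
        push_cast
        ring
      · rw [hc]
        exact prop e he _ ih.2
  have hall : ∀ i : ZMod (2 * S.r), σ i = σ 0 + e * i := by
    intro i
    have hrep : ((i.val : ℕ) : ZMod (2 * S.r)) = i := ZMod.natCast_rightInverse i
    rw [← hrep]
    exact (hnat i.val).1
  rcases he with rfl | rfl
  · left
    exact ⟨σ 0, fun i => by rw [← hσ' i, hall i]; congr 1; ring⟩
  · right
    exact ⟨σ 0, fun i => by rw [← hσ' i, hall i]; congr 1; ring⟩


/-- A kernel element cannot act on an alternating cycle as the reflection about a
vertex, when the attachment number is smaller than the radius. -/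
lemma no_reflection (har : S.att < S.r) {g : S.Γ ≃g S.Γ}
    (hg : g ∈ S.altKernel) (c : AltCycle S.Γ S.O (2 * S.r))
    (hrefl : ∀ i, g (c.f i) = c.f (-i)) : False := by
  haveI := S.finite
  have hr : 2 ≤ S.r := by have := S.att_pos; omega
  have hgE : ∀ E, IsAltEdgeSet S.Γ S.O (2 * S.r) E → Sym2.map (g : V → V) '' E = E :=
    fun E hE => hg.2 E hE
  -- orientation alternation along the cycle
  have key : ∀ i : ZMod (2 * S.r),
      S.O (c.f i) (c.f (i + 1)) ↔ ¬ S.O (c.f (i + 1)) (c.f (i + 2)) := by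
    intro i
    have h1 := c.alt i
    have h2 := S.O_choice (show S.Γ.Adj (c.f (i + 1)) (c.f (i + 1 + 1)) from c.adj (i + 1))
    rw [show i + 1 + 1 = i + 2 by ring] at h2
    tauto
  have adj01 : S.Γ.Adj (c.f 0) (c.f 1) := by
    have := c.adj 0; rwa [zero_add] at this
  have h02 : S.O (c.f 0) (c.f 1) ↔ S.O (c.f 2) (c.f (2 + 1)) := by
    have k0 := key 0
    have k1 := key 1
    rw [zero_add, show (0 : ZMod (2 * S.r)) + 2 = 2 from by ring] at k0
    rw [show (1 : ZMod (2 * S.r)) + 1 = 2 from by ring,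
      show (1 : ZMod (2 * S.r)) + 2 = 2 + 1 from by ring] at k1
    tauto
  have adj23 : S.Γ.Adj (c.f 2) (c.f (2 + 1)) := c.adj 2
  -- an element of G rotating the cycle by 2
  obtain ⟨h, hhG, hv0, hv1⟩ : ∃ h' ∈ S.G, h' (c.f 0) = c.f 2 ∧ h' (c.f 1) = c.f (2 + 1) := by
    by_cases hO : S.O (c.f 0) (c.f 1)
    · obtain ⟨h', hh', h1, h2⟩ := S.O_orbit hO (h02.mp hO)
      exact ⟨h', hh', h1, h2⟩
    · have hO1 : S.O (c.f 1) (c.f 0) := (S.O_choice adj01.symm).mpr hO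
      have hO2 : S.O (c.f (2 + 1)) (c.f 2) :=
        (S.O_choice adj23.symm).mpr (fun hx => hO (h02.mpr hx))
      obtain ⟨h', hh', h1, h2⟩ := S.O_orbit hO1 hO2
      exact ⟨h', hh', h2, h1⟩
  have hEfix : Sym2.map (h : V → V) '' cycEdges c = cycEdges c := by
    rw [← cycEdges_mapCycle S hhG c]
    refine edge_unique S hr ⟨mapCycle S hhG c, rfl⟩ ⟨c, rfl⟩
      (e := s(c.f 2, c.f (2 + 1))) ?_ ⟨2, rfl⟩
    refine ⟨0, ?_⟩
    show s(h (c.f 0), h (c.f (0 + 1))) = s(c.f 2, c.f (2 + 1))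
    rw [zero_add, hv0, hv1]
  have hrot : ∀ i, h (c.f i) = c.f (i + 2) := by
    rcases cycle_action S hr c h hEfix with ⟨k, hk⟩ | ⟨k, hk⟩
    · have h0k : (0 : ZMod (2 * S.r)) + k = 2 := c.inj (by rw [← hk 0]; exact hv0)
      have hk2 : k = 2 := by rwa [zero_add] at h0k
      intro i; rw [hk i, hk2]
    · exfalso
      have e0 : k - 0 = 2 := c.inj (by rw [← hk 0]; exact hv0)
      have e1 : k - 1 = 2 + 1 := c.inj (by rw [← hk 1]; exact hv1)
      apply two_ne_zero_zmod S hr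
      linear_combination e0 - e1
  -- the "other" alternating cycle through each vertex of c
  have hsupp : ∀ i : ZMod (2 * S.r), c.f i ∈ suppOf (cycEdges c) := fun i => by
    rw [suppOf_cycEdges]; exact ⟨i, rfl⟩
  choose D hD1 hD2 hD3 hD4 using fun i : ZMod (2 * S.r) =>
    other_cycle S ⟨c, rfl⟩ (hsupp i)
  have key1 : D 1 = D (-1) := by
    have hmem : c.f (-1) ∈ suppOf (D 1) := by
      have h1 := mem_suppOf_map (φ := (g : V → V)) (hD2 1)
      rw [hgE (D 1) (hD1 1)] at h1
      rwa [hrefl 1] at h1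
    rcases hD4 (-1) (D 1) (hD1 1) hmem with h' | h'
    · exact absurd h' (hD3 1)
    · exact h'
  have key2 : ∀ i, Sym2.map (h : V → V) '' D i = D (i + 2) := by
    intro i
    have hX : IsAltEdgeSet S.Γ S.O (2 * S.r) (Sym2.map (h : V → V) '' D i) :=
      isAlt_map S hhG (hD1 i)
    have hXm : c.f (i + 2) ∈ suppOf (Sym2.map (h : V → V) '' D i) := by
      have := mem_suppOf_map (φ := (h : V → V)) (hD2 i)
      rwa [hrot i] at this
    rcases hD4 (i + 2) _ hX hXm with h' | h'
    · exfalso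
      apply hD3 i
      have hinj : Function.Injective (Sym2.map (h : V → V)) :=
        Sym2.map.injective h.toEquiv.injective
      apply Set.image_injective.mpr hinj
      rw [h', hEfix]
    · exact h'
  -- all odd vertices of c lie on the same "other" cycle
  have odd : ∀ j : ℕ, D ((2 * j + 1 : ℕ) : ZMod (2 * S.r)) = D 1 := by
    intro j
    induction j with
    | zero => norm_num
    | succ j ih =>
      have e1 : ((2 * (j + 1) + 1 : ℕ) : ZMod (2 * S.r)) =
          ((2 * j + 1 : ℕ) : ZMod (2 * S.r)) + 2 := by push_cast; ring
      rw [e1, ← key2, ih]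
      conv_lhs => rw [key1]
      rw [key2]
      norm_num
  -- contradiction with the attachment number
  obtain ⟨d, hd⟩ := hD1 1
  have hatt : (cycVerts c ∩ cycVerts d).ncard = S.att := by
    apply S.att_eq
    refine ⟨c, d, ?_, ⟨c.f 1, ⟨1, rfl⟩, ?_⟩, rfl⟩
    · rw [hd]; exact fun hE => (hD3 1) hE.symm
    · rw [← suppOf_cycEdges d, hd]; exact hD2 1
  have hsub : (fun j : ℕ => c.f ((2 * j + 1 : ℕ) : ZMod (2 * S.r))) '' Set.Iio S.r ⊆
      cycVerts c ∩ cycVerts d := by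
    rintro x ⟨j, hj, rfl⟩
    refine ⟨⟨_, rfl⟩, ?_⟩
    rw [← suppOf_cycEdges d, hd, ← odd j]
    exact hD2 _
  have hinj : Set.InjOn (fun j : ℕ => c.f ((2 * j + 1 : ℕ) : ZMod (2 * S.r)))
      (Set.Iio S.r) := by
    intro a ha b hb hab
    have h1 : ((2 * a + 1 : ℕ) : ZMod (2 * S.r)) = ((2 * b + 1 : ℕ) : ZMod (2 * S.r)) :=
      c.inj hab
    rw [ZMod.natCast_eq_natCast_iff] at h1
    have h2 : (2 * a + 1) % (2 * S.r) = (2 * b + 1) % (2 * S.r) := h1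
    have hal : a < S.r := Set.mem_Iio.mp ha
    have hbl : b < S.r := Set.mem_Iio.mp hb
    rw [Nat.mod_eq_of_lt (by omega), Nat.mod_eq_of_lt (by omega)] at h2
    omega
  have hIio : (Set.Iio S.r).ncard = S.r := by
    rw [← Finset.coe_Iio, Set.ncard_coe_finset, Nat.card_Iio]
  have hle := Set.ncard_le_ncard hsub (Set.toFinite _)
  rw [Set.ncard_image_of_injOn hinj, hIio, hatt] at hle
  omega

/-- A kernel element fixing a vertex of an alternating cycle fixes the cycle
pointwise. -/
lemma fix_cycle (har : S.att < S.r) {g : S.Γ ≃g S.Γ} (hg : g ∈ S.altKernel)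
    (c : AltCycle S.Γ S.O (2 * S.r)) (i₀ : ZMod (2 * S.r)) (hfix : g (c.f i₀) = c.f i₀) :
    ∀ i, g (c.f i) = c.f i := by
  have hr : 2 ≤ S.r := by have := S.att_pos; omega
  have hEfix : Sym2.map (g : V → V) '' cycEdges c = cycEdges c :=
    hg.2 (cycEdges c) ⟨c, rfl⟩
  rcases cycle_action S hr c g hEfix with ⟨k, hk⟩ | ⟨k, hk⟩
  · have h1 : i₀ + k = i₀ := c.inj (by rw [← hk i₀]; exact hfix)
    have hk0 : k = 0 := by linear_combination h1
    intro i
    rw [hk i, hk0, add_zero]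
  · exfalso
    have h1 : k - i₀ = i₀ := c.inj (by rw [← hk i₀]; exact hfix)
    apply no_reflection S har hg (rotCycle S c i₀)
    intro i
    show g (c.f (i + i₀)) = c.f (-i + i₀)
    rw [hk (i + i₀)]
    congr 1
    linear_combination h1

end StatementSevenAux

open StatementSevenAux in
/-- if `att_G(Γ) < rad_G(Γ)` then the kernel of the action of `G`
on the `G`-alternating cycles acts semiregularly on vertices. -/
theorem statement_7 {V : Type*} (S : Setup V) (har : S.att < S.r) :
    ∀ g ∈ S.altKernel, g ≠ 1 → ∀ v : V, g v ≠ v := by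
  intro g hg hgne v hfix
  apply hgne
  have step : ∀ u w : V, g u = u → S.Γ.Adj u w → g w = w := by
    intro u w hu hadj
    obtain ⟨c, i, hi⟩ := exists_cycle_through_edge S hadj
    have hi' : s(c.f i, c.f (i + 1)) = s(u, w) := hi
    rcases Sym2.eq_iff.mp hi' with ⟨h1, h2⟩ | ⟨h1, h2⟩
    · have hall := fix_cycle S har hg c i (by rw [h1]; exact hu)
      rw [← h2]; exact hall (i + 1)
    · have hall := fix_cycle S har hg c (i + 1) (by rw [h2]; exact hu)
      rw [← h1]; exact hall i
  have walk_fix : ∀ (a b : V), S.Γ.Walk a b → g a = a → g b = b := by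
    intro a b p
    induction p with
    | nil => exact id
    | cons hadj p ih => intro ha; exact ih (step _ _ ha hadj)
  have hall : ∀ u : V, g u = u := fun u =>
    walk_fix v u (S.conn.preconnected v u).some hfix
  exact DFunLike.ext g 1 hall
end
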